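/- Let p be a prime, m ≥ 1 an integer and x ∈ ℤ_p. The digit expansion (a_i)_{i≥0} of x satisfies a_{i+m} = a_i for all i ≥ 0 (i.e. is purely periodic with period dividing m) if and only if there exists an integer j with 0 ≤ j < p^m such that (1 − p^m)·x = j in ℤ_p. -/

import Mathlib

section aux
variable (p : ℕ) [Fact p.Prime]

lemma aux_norm_pow (i : ℕ) : ‖(p : PadicInt p)^i‖ = ((p:ℝ)⁻¹)^i := by
  rw [PadicInt.norm_p_pow, zpow_neg, zpow_natCast, ← inv_pow]

lemma aux_summable (c : ℕ → ℕ) :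
    Summable (fun i => (c i : PadicInt p) * (p : PadicInt p) ^ i) := by
  have hp1 : (1:ℝ) < p := by exact_mod_cast (Fact.out : p.Prime).one_lt
  apply Summable.of_norm_bounded (g := fun i => ((p:ℝ)⁻¹)^i)
  · exact summable_geometric_of_lt_one (by positivity) (by
      rw [inv_lt_one_iff₀]; right; exact hp1)
  · intro i
    calc ‖(c i : PadicInt p) * (p:PadicInt p)^i‖
        ≤ ‖(c i : PadicInt p)‖ * ‖(p:PadicInt p)^i‖ := norm_mul_le _ _
      _ ≤ 1 * ((p:ℝ)⁻¹)^i := by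
          rw [aux_norm_pow]
          exact mul_le_mul_of_nonneg_right (PadicInt.norm_le_one _) (by positivity)
      _ = ((p:ℝ)⁻¹)^i := one_mul _

lemma aux_tail (c : ℕ → ℕ) (n : ℕ) :
    (∑' i, (c i : PadicInt p) * (p:PadicInt p)^i)
      = (∑ i ∈ Finset.range n, (c i : PadicInt p) * (p:PadicInt p)^i)
        + (p:PadicInt p)^n * ∑' i, (c (i+n) : PadicInt p) * (p:PadicInt p)^i := by
  have hs := aux_summable p c
  have hs' : Summable (fun i => (c (i+n) : PadicInt p) * (p : PadicInt p) ^ i) :=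
    aux_summable p (fun i => c (i+n))
  rw [← Summable.sum_add_tsum_nat_add n hs]
  congr 1
  calc (∑' i, (c (i+n) : PadicInt p) * (p:PadicInt p)^(i+n))
      = ∑' i, (p:PadicInt p)^n * ((c (i+n) : PadicInt p) * (p:PadicInt p)^i) := by
        apply tsum_congr; intro i; rw [pow_add]; ring
    _ = (p:PadicInt p)^n * ∑' i, (c (i+n) : PadicInt p) * (p:PadicInt p)^i :=
        hs'.tsum_mul_left _

lemma aux_periodic (c : ℕ → ℕ) (m : ℕ) (hc : ∀ i, c (i+m) = c i) :
    (1 - (p:PadicInt p)^m) * (∑' i, (c i : PadicInt p)*(p:PadicInt p)^i)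
      = ∑ i ∈ Finset.range m, (c i : PadicInt p)*(p:PadicInt p)^i := by
  have h := aux_tail p c m
  have he : (∑' i, (c (i+m) : PadicInt p) * (p:PadicInt p)^i)
      = ∑' i, (c i : PadicInt p)*(p:PadicInt p)^i := by
    congr 1; funext i; rw [hc]
  rw [he] at h
  linear_combination h

lemma aux_unique (a b : ℕ → ℕ) (ha : ∀ i, a i < p) (hb : ∀ i, b i < p)
    (h : (∑' i, (a i:PadicInt p)*(p:PadicInt p)^i)
        = ∑' i, (b i:PadicInt p)*(p:PadicInt p)^i) :
    ∀ n, a n = b n := by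
  intro n
  induction n using Nat.strong_induction_on with
  | _ n ih =>
    have h1 := aux_tail p a (n+1)
    have h2 := aux_tail p b (n+1)
    set Ta := ∑' i, (a (i+(n+1)) : PadicInt p) * (p:PadicInt p)^i with hTa
    set Tb := ∑' i, (b (i+(n+1)) : PadicInt p) * (p:PadicInt p)^i with hTb
    rw [Finset.sum_range_succ] at h1 h2
    have hsum : (∑ i ∈ Finset.range n, (a i : PadicInt p) * (p:PadicInt p)^i)
        = ∑ i ∈ Finset.range n, (b i : PadicInt p) * (p:PadicInt p)^i := by
      apply Finset.sum_congr rfl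
      intro i hi
      rw [ih i (Finset.mem_range.mp hi)]
    rw [h, h2, hsum, pow_succ] at h1
    have key : ((a n : PadicInt p) - b n) * (p:PadicInt p)^n
        = ((p:PadicInt p) * (Tb - Ta)) * (p:PadicInt p)^n := by
      linear_combination -h1
    have hpn : ((p:PadicInt p)^n) ≠ 0 :=
      pow_ne_zero n (Nat.cast_ne_zero.mpr (Fact.out : p.Prime).ne_zero)
    have key2 := mul_right_cancel₀ hpn key
    have hcast : (((a n : ℤ) - b n : ℤ) : PadicInt p) = (a n : PadicInt p) - b n := by
      push_cast; ring
    have hnorm : ‖(((a n : ℤ) - b n : ℤ) : PadicInt p)‖ < 1 := by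
      rw [hcast, key2]
      calc ‖(p:PadicInt p) * (Tb - Ta)‖ ≤ ‖(p:PadicInt p)‖ * 1 := by
            apply le_trans (norm_mul_le _ _)
            exact mul_le_mul_of_nonneg_left (PadicInt.norm_le_one _) (norm_nonneg _)
        _ = (p:ℝ)⁻¹ := by rw [PadicInt.norm_p, mul_one]
        _ < 1 := by
            rw [inv_lt_one_iff₀]; right
            exact_mod_cast (Fact.out : p.Prime).one_lt
    have hdvd : (p:ℤ) ∣ ((a n : ℤ) - (b n : ℤ)) :=
      (PadicInt.norm_int_lt_one_iff_dvd _).mp hnorm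
    obtain ⟨k, hk⟩ := hdvd
    have hp0 : (0:ℤ) < p := by exact_mod_cast (Fact.out : p.Prime).pos
    have h1' : (a n : ℤ) < p := by exact_mod_cast ha n
    have h2' : (b n : ℤ) < p := by exact_mod_cast hb n
    have ha0 : (0:ℤ) ≤ (a n : ℤ) := Int.natCast_nonneg _
    have hb0 : (0:ℤ) ≤ (b n : ℤ) := Int.natCast_nonneg _
    have hk1 : k < 1 := lt_of_mul_lt_mul_left (a := (p:ℤ)) (by linarith [hk]) hp0.le
    have hk2 : -1 < k := lt_of_mul_lt_mul_left (a := (p:ℤ)) (by linarith [hk]) hp0.le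
    have hk0 : k = 0 := by omega
    rw [hk0, mul_zero] at hk
    omega

lemma aux_nat_digits (n : ℕ) : ∀ j : ℕ, j < p^n →
    ∑ i ∈ Finset.range n, (j / p^i % p) * p^i = j := by
  induction n with
  | zero => intro j hj; simp [Nat.lt_one_iff.mp hj]
  | succ n ih =>
    intro j hj
    rw [Finset.sum_range_succ']
    have hstep : ∀ i, j / p^(i+1) % p * p^(i+1) = ((j/p) / p^i % p * p^i) * p := by
      intro i
      rw [pow_succ, Nat.mul_comm (p^i) p, ← Nat.div_div_eq_div_mul]
      ring
    simp only [hstep]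
    rw [← Finset.sum_mul]
    have hj' : j / p < p^n := by
      rw [Nat.div_lt_iff_lt_mul (Fact.out : p.Prime).pos]
      rw [← pow_succ]; exact hj
    rw [ih _ hj']
    simp [Nat.div_add_mod, Nat.mul_comm]

lemma aux_lt (a : ℕ → ℕ) (ha : ∀ i, a i < p) (m : ℕ) :
    ∑ i ∈ Finset.range m, a i * p^i < p^m := by
  induction m with
  | zero => simp
  | succ m ih =>
    rw [Finset.sum_range_succ]
    have h1 : a m * p^m ≤ (p-1) * p^m :=
      Nat.mul_le_mul_right _ (by have := ha m; omega)
    have hp : 1 ≤ p := (Fact.out : p.Prime).one_lt.le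
    have h2 : p^m + (p-1)*p^m = p^(m+1) := by
      obtain ⟨q, hq⟩ := Nat.exists_eq_add_of_le hp
      subst hq
      have : 1 + q - 1 = q := by omega
      rw [this, pow_succ]
      ring
    omega

end aux

theorem purely_periodic_iff (p : ℕ) [Fact p.Prime] (m : ℕ) (hm : 1 ≤ m)
    (x : PadicInt p) (a : ℕ → ℕ)
    -- `a` is the digit expansion of `x`
    (ha : ∀ i, a i < p)
    (hx : x = ∑' i : ℕ, (a i : PadicInt p) * (p : PadicInt p) ^ i) :
    (∀ i : ℕ, a (i + m) = a i) ↔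
      ∃ j : ℕ, j < p ^ m ∧ (1 - (p : PadicInt p) ^ m) * x = (j : PadicInt p) := by
  constructor
  · intro hper
    refine ⟨∑ i ∈ Finset.range m, a i * p^i, aux_lt p a ha m, ?_⟩
    rw [hx, aux_periodic p a m hper]
    push_cast
    rfl
  · rintro ⟨j, hj, hjx⟩
    set b : ℕ → ℕ := fun i => j / p^(i % m) % p with hb
    have hbp : ∀ i, b i < p := fun i => Nat.mod_lt _ (Fact.out : p.Prime).pos
    have hbper : ∀ i, b (i+m) = b i := by
      intro i; simp only [hb]; rw [Nat.add_mod_right]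
    have hy := aux_periodic p b m hbper
    have hSj : (∑ i ∈ Finset.range m, (b i : PadicInt p)*(p:PadicInt p)^i)
        = (j : PadicInt p) := by
      have hc : ∀ i ∈ Finset.range m, (b i : PadicInt p)*(p:PadicInt p)^i
          = ((j / p^i % p : ℕ) : PadicInt p) * (p:PadicInt p)^i := by
        intro i hi
        simp only [hb]
        rw [Nat.mod_eq_of_lt (Finset.mem_range.mp hi)]
      rw [Finset.sum_congr rfl hc]
      rw_mod_cast [aux_nat_digits p m j hj]
    rw [hSj] at hy
    have hne : (1 - (p:PadicInt p)^m) ≠ 0 := by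
      intro h0
      have h1 : (1 : PadicInt p) = (p:PadicInt p)^m := by linear_combination h0
      have h2 := congrArg norm h1
      rw [norm_one, aux_norm_pow] at h2
      have hp1 : (1:ℝ) < p := by exact_mod_cast (Fact.out : p.Prime).one_lt
      have h3 : ((p:ℝ)⁻¹)^m < 1 := by
        apply pow_lt_one₀ (by positivity) _ (by omega)
        rw [inv_lt_one_iff₀]; right; exact hp1
      linarith
    have hxy : x = ∑' i, (b i : PadicInt p)*(p:PadicInt p)^i := by
      have h4 := hy.trans hjx.symm
      exact (mul_left_cancel₀ hne h4).symm
    have heq := aux_unique p a b ha hbp (hx.symm.trans hxy)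
    intro i
    rw [heq (i+m), heq i, hbper]
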